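/- Let T be a finite set, G an elementary abelian 2-group acting on an index set of the same cardinality as T via a simply transitive action, let c : G × T → ℂ be an invertible matrix, z ∈ G, and ζ ∈ {±1}. Suppose that for every τ ∈ T, either c(s,τ) = ζ·c(s·z, τ) for all s ∈ G, or c(s,τ) = −ζ·c(s·z, τ)·α(s) for all s ∈ G with some positive reals α(s) independent of τ. Then the number of τ in the first case equals the number in the second case, namely |T|/2. -/

import Mathlib

/-- The subspace of functions `f : G → ℂ` with `f s = β s * f (s*z)` for all `s`. -/
noncomputable def eigSub (G : Type*) [Group G] (z : G) (β : G → ℂ) : Submodule ℂ (G → ℂ) where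
  carrier := {f | ∀ s : G, f s = β s * f (s * z)}
  add_mem' := by intro f g hf hg s; simp only [Pi.add_apply, hf s, hg s]; ring
  zero_mem' := by intro s; simp
  smul_mem' := by intro a f hf s; simp only [Pi.smul_apply, smul_eq_mul, hf s]; ring

/-- Columns lying in such an eigen-subspace number at most `|G ⧸ ⟨z⟩|`. -/
lemma aux13 (G : Type*) [Group G] [Fintype G] (h2 : ∀ g : G, g * g = 1)
    (T : Type*) [Fintype T] (c : G → T → ℂ)
    (hli : LinearIndependent ℂ (fun τ : T => fun s : G => c s τ))
    (z : G) (β : G → ℂ) (P : T → Prop) [DecidablePred P]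
    (hP : ∀ τ, P τ → ∀ s : G, c s τ = β s * c (s * z) τ) :
    Fintype.card {τ // P τ} ≤ Nat.card (G ⧸ Subgroup.zpowers z) := by
  classical
  set H := Subgroup.zpowers z with hH
  -- membership in zpowers z is {1, z}
  have hmem : ∀ w ∈ H, w = 1 ∨ w = z := by
    rintro w ⟨k, rfl⟩
    rcases Int.even_or_odd k with ⟨n, hn⟩ | ⟨n, hn⟩
    · left; subst hn; show z ^ (n + n) = 1; rw [zpow_add]; exact h2 _
    · right; subst hn; show z ^ (2 * n + 1) = z
      have h22 : z ^ (2 : ℤ) = 1 := by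
        rw [show (2 : ℤ) = 1 + 1 by norm_num, zpow_add, zpow_one]; exact h2 z
      rw [zpow_add, zpow_one, zpow_mul, h22, one_zpow, one_mul]
  -- restriction map to the quotient
  let res : (G → ℂ) →ₗ[ℂ] ((G ⧸ H) → ℂ) :=
    LinearMap.funLeft ℂ ℂ (Quotient.out : G ⧸ H → G)
  -- the eigen-subspace meets ker res trivially
  have hker : ∀ f ∈ eigSub G z β, res f = 0 → f = 0 := by
    intro f hf hres
    funext g
    show f g = 0
    have hout : ∀ q : G ⧸ H, f q.out = 0 := fun q => by exact congrFun hres q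
    obtain ⟨h, hh⟩ := QuotientGroup.mk_out_eq_mul H g
    rcases hmem h h.2 with h1 | h1
    · have hg : (QuotientGroup.mk g : G ⧸ H).out = g := by rw [hh, h1, mul_one]
      have := hout (QuotientGroup.mk g)
      rwa [hg] at this
    · have hgz : (QuotientGroup.mk g : G ⧸ H).out = g * z := by rw [hh, h1]
      have h0 : f (g * z) = 0 := by rw [← hgz]; exact hout _
      have := hf g
      rw [h0, mul_zero] at this
      simpa using this
  have hdisj : Disjoint (Submodule.span ℂ
      (Set.range (fun τ : {τ // P τ} => fun s : G => c s τ.1))) (LinearMap.ker res) := by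
    have hspan : Submodule.span ℂ
        (Set.range (fun τ : {τ // P τ} => fun s : G => c s τ.1)) ≤ eigSub G z β := by
      rw [Submodule.span_le]
      rintro _ ⟨τ, rfl⟩ s
      exact hP τ.1 τ.2 s
    rw [Submodule.disjoint_def]
    intro x hx hker'
    exact hker x (hspan hx) (LinearMap.mem_ker.mp hker')
  have hli' : LinearIndependent ℂ (fun τ : {τ // P τ} => fun s : G => c s τ.1) :=
    hli.comp Subtype.val Subtype.val_injective
  have hli'' := hli'.map hdisj
  have hcard := hli''.fintype_card_le_finrank
  rw [Module.finrank_pi ℂ] at hcard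
  exact hcard.trans_eq Nat.card_eq_fintype_card.symm

theorem stmt13 (G : Type*) [Group G] [Fintype G] (h2 : ∀ g : G, g * g = 1)
    (T : Type*) [Fintype T] (hcard : Fintype.card G = Fintype.card T)
    (c : G → T → ℂ)
    (hli : LinearIndependent ℂ (fun τ : T => fun s : G => c s τ))
    (z : G) (hz : z ≠ 1) (ζ : ℂ) (hζ : ζ = 1 ∨ ζ = -1)
    (α : G → ℝ) (hα : ∀ s, 0 < α s)
    (hcases : ∀ τ : T, (∀ s : G, c s τ = ζ * c (s * z) τ) ∨
      (∀ s : G, c s τ = -ζ * c (s * z) τ * (α s : ℂ))) :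
    Nat.card {τ : T // ∀ s : G, c s τ = ζ * c (s * z) τ} = Fintype.card T / 2 ∧
    Nat.card {τ : T // ∀ s : G, c s τ = -ζ * c (s * z) τ * (α s : ℂ)}
      = Fintype.card T / 2 := by
  classical
  set H := Subgroup.zpowers z with hH
  -- group cardinality
  have horder : orderOf z = 2 := orderOf_eq_prime (by rw [sq]; exact h2 z) hz
  have hH2 : Nat.card H = 2 := by rw [hH, Nat.card_zpowers, horder]
  set m := Nat.card (G ⧸ H) with hm
  have hG : Fintype.card G = m * 2 := by
    have := Subgroup.card_eq_card_quotient_mul_card_subgroup H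
    rwa [hH2, Nat.card_eq_fintype_card] at this
  set Pa : T → Prop := fun τ => ∀ s : G, c s τ = ζ * c (s * z) τ with hPa
  set Pb : T → Prop := fun τ => ∀ s : G, c s τ = -ζ * c (s * z) τ * (α s : ℂ) with hPb
  -- the two cases are mutually exclusive
  have hzne : ζ ≠ 0 := by rcases hζ with h | h <;> simp [h]
  have hexcl : ∀ τ, Pa τ → Pb τ → False := by
    intro τ ha hb
    have hzero : ∀ g : G, c g τ = 0 := by
      have key : ∀ s : G, c (s * z) τ = 0 := by
        intro s
        have h1 := ha s
        have h2' := hb s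
        rw [h1] at h2'
        have : c (s * z) τ * (ζ * (1 + (α s : ℂ))) = 0 := by ring_nf; linear_combination h2'
        rcases mul_eq_zero.mp this with h | h
        · exact h
        · exfalso
          rcases mul_eq_zero.mp h with h | h
          · exact hzne h
          · have hre : ((1 + α s : ℝ) : ℂ) = 0 := by push_cast; linear_combination h
            have := Complex.ofReal_eq_zero.mp hre
            linarith [hα s]
      intro g
      have := key (g * z)
      rwa [mul_assoc, h2 z, mul_one] at this
    have := hli.ne_zero τ
    apply this
    funext s
    exact hzero s
  have hiff : ∀ τ, Pb τ ↔ ¬ Pa τ := by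
    intro τ
    constructor
    · intro hb ha; exact hexcl τ ha hb
    · intro hna; rcases hcases τ with h | h
      · exact absurd h hna
      · exact h
  -- cardinality bounds
  have ha_le : Fintype.card {τ // Pa τ} ≤ m :=
    aux13 G h2 T c hli z (fun _ => ζ) Pa (fun τ h s => h s)
  have hb_le : Fintype.card {τ // Pb τ} ≤ m := by
    refine aux13 G h2 T c hli z (fun s => -ζ * (α s : ℂ)) Pb (fun τ h s => ?_)
    rw [h s]; ring
  have hb_eq : Fintype.card {τ // Pb τ} = Fintype.card T - Fintype.card {τ // Pa τ} := by
    have : Fintype.card {τ // Pb τ} = Fintype.card {τ // ¬ Pa τ} :=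
      Fintype.card_congr (Equiv.subtypeEquivRight hiff)
    rw [this, Fintype.card_subtype_compl]
  have ha_le_T : Fintype.card {τ // Pa τ} ≤ Fintype.card T := Fintype.card_subtype_le _
  rw [hG] at hcard
  have goal1 : Fintype.card {τ // Pa τ} = Fintype.card T / 2 := by omega
  have goal2 : Fintype.card {τ // Pb τ} = Fintype.card T / 2 := by omega
  exact ⟨by rw [Nat.card_eq_fintype_card]; exact goal1,
    by rw [Nat.card_eq_fintype_card]; exact goal2⟩
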